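/- Let X and Y be compact metric spaces, P : X → X and E : Y → Y continuous maps, and h : X → Y a continuous surjection with h ∘ P = E ∘ h. Assume: (i) E is uniquely ergodic, i.e. there is exactly one E-invariant Borel probability measure ν on Y, and ν has no atoms; (ii) there is a countable family (I_n)_{n ≥ 1} of pairwise disjoint closed subsets of X such that each image h(I_n) is a single point and h restricted to X ∖ ⋃_n I_n is injective. Then any two P-invariant Borel probability measures on X coincide; i.e. P has at most one invariant Borel probability measure. (The core of the proof of Proposition 2.6: a Poincaré map that is topologically semi-conjugate, by collapsing countably many closed intervals to points, to a uniquely ergodic interval exchange transformation is itself uniquely ergodic.) -/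

import Mathlib

open MeasureTheory

/-- The core of the proof of Proposition 2.6: a continuous map semi-conjugate, by a map
collapsing countably many pairwise disjoint closed sets to points and injective elsewhere,
to a uniquely ergodic map whose unique invariant measure has no atoms, has at most one
invariant Borel probability measure. -/
theorem unique_ergodicity_lifts_through_semiconjugacy
    {X Y : Type*} [MetricSpace X] [CompactSpace X] [MetricSpace Y] [CompactSpace Y]
    [MeasurableSpace X] [BorelSpace X] [MeasurableSpace Y] [BorelSpace Y]
    (P : X → X) (E : Y → Y) (h : X → Y)
    (hP : Continuous P) (hE : Continuous E) (hh : Continuous h)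
    (hsurj : Function.Surjective h) (hconj : h ∘ P = E ∘ h)
    (ν : Measure Y) (hνprob : IsProbabilityMeasure ν)
    (hνinv : Measure.map E ν = ν)
    (hνunique : ∀ ν' : Measure Y, IsProbabilityMeasure ν' → Measure.map E ν' = ν' → ν' = ν)
    (hνatom : ∀ y : Y, ν {y} = 0)
    (I : ℕ → Set X)
    (hclosed : ∀ n, IsClosed (I n))
    (hdisj : Pairwise (Function.onFun Disjoint I))
    (hpoint : ∀ n, ∃ y : Y, h '' I n = {y})
    (hinj : Set.InjOn h (⋃ n, I n)ᶜ) :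
    ∀ μ₁ μ₂ : Measure X, IsProbabilityMeasure μ₁ → IsProbabilityMeasure μ₂ →
      Measure.map P μ₁ = μ₁ → Measure.map P μ₂ = μ₂ → μ₁ = μ₂ := by
  have hpolX : PolishSpace X := inferInstance
  set C : Set X := (⋃ n, I n)ᶜ with hC
  have hCmeas : MeasurableSet C :=
    (MeasurableSet.iUnion fun n => (hclosed n).measurableSet).compl
  -- key lemma: for any invariant probability measure μ, μ s = ν (h '' (s ∩ C))
  have key : ∀ μ : Measure X, IsProbabilityMeasure μ → Measure.map P μ = μ →
      ∀ s : Set X, MeasurableSet s → μ s = ν (h '' (s ∩ C)) := by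
    intro μ hμprob hμinv s hs
    have hmap : Measure.map h μ = ν := by
      apply hνunique
      · exact Measure.isProbabilityMeasure_map hh.measurable.aemeasurable
      · rw [Measure.map_map hE.measurable hh.measurable, ← hconj,
          ← Measure.map_map hh.measurable hP.measurable, hμinv]
    -- μ (I n) = 0
    have hIn : ∀ n, μ (I n) = 0 := by
      intro n
      obtain ⟨y, hy⟩ := hpoint n
      have hsub : I n ⊆ h ⁻¹' {y} := by
        intro x hx
        have : h x ∈ h '' I n := ⟨x, hx, rfl⟩
        rwa [hy] at this
      have : μ (h ⁻¹' {y}) = ν {y} := by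
        rw [← hmap, Measure.map_apply hh.measurable (measurableSet_singleton y)]
      exact le_antisymm (le_trans (measure_mono hsub) (by rw [this, hνatom y])) zero_le
    have hCnull : μ Cᶜ = 0 := by
      rw [hC, compl_compl]
      exact measure_iUnion_null hIn
    have hμsC : μ s = μ (s ∩ C) := (measure_inter_conull hCnull).symm
    have himg : MeasurableSet (h '' (s ∩ C)) :=
      (hs.inter hCmeas).image_of_continuousOn_injOn hh.continuousOn
        (hinj.mono Set.inter_subset_right)
    have hpre : h ⁻¹' (h '' (s ∩ C)) ∩ C = s ∩ C := by
      ext x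
      constructor
      · rintro ⟨⟨a, ⟨haS, haC⟩, hax⟩, hxC⟩
        have : a = x := hinj haC hxC hax
        subst this; exact ⟨haS, haC⟩
      · rintro ⟨hxS, hxC⟩
        exact ⟨⟨x, ⟨hxS, hxC⟩, rfl⟩, hxC⟩
    calc μ s = μ (s ∩ C) := hμsC
      _ = μ (h ⁻¹' (h '' (s ∩ C)) ∩ C) := by rw [hpre]
      _ = μ (h ⁻¹' (h '' (s ∩ C))) := measure_inter_conull hCnull
      _ = ν (h '' (s ∩ C)) := by
          rw [← hmap, Measure.map_apply hh.measurable himg]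
  intro μ₁ μ₂ h₁p h₂p h₁i h₂i
  ext s hs
  rw [key μ₁ h₁p h₁i s hs, key μ₂ h₂p h₂i s hs]
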